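/- arXiv:1107.0606 — 2 statements merged into one kernel-verified Lean document; each statement's English description precedes it below -/
import Mathlib

section
/- Let A(s) be a nonnegative self-adjoint-endomorphism-valued solution of the Riccati equation A′(s) + A(s)² + R(s) = 0 on ℝⁿ with R(s) ≥ 0 self-adjoint, and suppose |R(s)| ≤ C_R and |R′(s)| ≤ C_{R′} for s ∈ [0, 1]. Then there exists a self-adjoint endomorphism A₀ of ℝⁿ with A(0) ≥ A₀ and A₀ ≤ C_R·Id, and a constant ε₀ = ε₀(C_R, C_{R′}) > 0 such that ⟨A₀w, w⟩ ≥ ε₀ ⟨R(0)w, w⟩² for every unit vector w ∈ ℝⁿ. -/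
open Set

noncomputable section

/-- Euclidean space `ℝⁿ`. -/
abbrev E (n : ℕ) := EuclideanSpace ℝ (Fin n)

/-- A self-adjoint (continuous linear) endomorphism of `ℝⁿ`. -/
def SelfAdj {n : ℕ} (A : E n →L[ℝ] E n) : Prop :=
  ∀ v w : E n, (inner ℝ (A v) w : ℝ) = inner ℝ v (A w)

/-- `A ≤ B` in the sense of quadratic forms. -/
def EndLE {n : ℕ} (A B : E n →L[ℝ] E n) : Prop :=
  ∀ v : E n, (inner ℝ (A v) v : ℝ) ≤ inner ℝ (B v) v

set_option maxHeartbeats 1000000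
set_option synthInstance.maxHeartbeats 400000

/-- **Lemma (Riccati comparison, initial form estimate).** Let `A(s)` be a
nonnegative self-adjoint solution of the Riccati equation `A' + A² + R = 0` on
`ℝⁿ` with `R(s) ≥ 0` self-adjoint, and assume `|R| ≤ C_R`, `|R'| ≤ C_R'` on
`[0, 1]`. Then there is a self-adjoint `A₀` with `A(0) ≥ A₀`, `A₀ ≤ C_R · Id`,
and a constant `ε₀ = ε₀(C_R, C_R') > 0` with
`⟨A₀ w, w⟩ ≥ ε₀ ⟨R(0) w, w⟩²` for all unit vectors `w`. -/
theorem riccati_initial_form_estimate (C_R C_R' : ℝ) :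
    ∃ ε₀ : ℝ, 0 < ε₀ ∧
    ∀ (n : ℕ) (A R R' : ℝ → (E n →L[ℝ] E n)),
      (∀ s : ℝ, 0 ≤ s → SelfAdj (A s) ∧ SelfAdj (R s)) →
      -- the Riccati equation `A'(s) + A(s)² + R(s) = 0`
      (∀ s : ℝ, 0 ≤ s → HasDerivAt A (-(A s ∘L A s) - R s) s) →
      -- `A(s) ≥ 0` and `R(s) ≥ 0`
      (∀ s : ℝ, 0 ≤ s → ∀ v : E n,
        0 ≤ (inner ℝ (A s v) v : ℝ) ∧ 0 ≤ (inner ℝ (R s v) v : ℝ)) →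
      -- `R` differentiable with derivative `R'`, `|R| ≤ C_R`, `|R'| ≤ C_R'` on `[0,1]`
      (∀ s ∈ Icc (0 : ℝ) 1, HasDerivAt R (R' s) s ∧ ‖R s‖ ≤ C_R ∧ ‖R' s‖ ≤ C_R') →
      ∃ A₀ : E n →L[ℝ] E n, SelfAdj A₀ ∧
        EndLE A₀ (A 0) ∧
        (∀ v : E n, (inner ℝ (A₀ v) v : ℝ) ≤ C_R * ‖v‖ ^ 2) ∧
        (∀ w : E n, ‖w‖ = 1 →
          ε₀ * (inner ℝ (R 0 w) w : ℝ) ^ 2 ≤ (inner ℝ (A₀ w) w : ℝ)) := by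
  rcases le_or_gt C_R 0 with hCRneg | hCR
  · -- degenerate case: then necessarily `R 0 = 0` and `A₀ = 0` works
    refine ⟨1, one_pos, ?_⟩
    intro n A R R' hsa hode hpos hR
    have hnorm := (hR 0 ⟨le_rfl, zero_le_one⟩).2.1
    have hCR0 : C_R = 0 := le_antisymm hCRneg (le_trans (norm_nonneg _) hnorm)
    have hR00 : R 0 = 0 := by
      rw [← norm_eq_zero]
      exact le_antisymm (hnorm.trans hCRneg) (norm_nonneg _)
    refine ⟨0, ?_, ?_, ?_, ?_⟩
    · intro v w; simp
    · intro v
      simpa using (hpos 0 le_rfl v).1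
    · intro v
      rw [hCR0]
      simp
    · intro w hw
      rw [hR00]
      simp
  -- main case `0 < C_R`
  set CR : ℝ := max C_R 1 with hCRdef
  set CR' : ℝ := max C_R' 1 with hCR'def
  have hCR1 : (1:ℝ) ≤ CR := le_max_right _ _
  have hCR'1 : (1:ℝ) ≤ CR' := le_max_right _ _
  have hCRpos : (0:ℝ) < CR := lt_of_lt_of_le one_pos hCR1
  have hCR'pos : (0:ℝ) < CR' := lt_of_lt_of_le one_pos hCR'1
  have hCRle : C_R ≤ CR := le_max_left _ _
  set K₁ : ℝ := 2 * CR^2 * CR' with hK₁def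
  set K₂ : ℝ := 2 * K₁ + 18 * CR^2 with hK₂def
  have hK₁pos : 0 < K₁ := by positivity
  have hK₂pos : 0 < K₂ := by positivity
  set c : ℝ := min 1 C_R with hcdef
  have hcpos : 0 < c := lt_min one_pos hCR
  have hc1 : c ≤ 1 := min_le_left _ _
  have hcC : c ≤ C_R := min_le_right _ _
  refine ⟨c / K₂, div_pos hcpos hK₂pos, ?_⟩
  intro n A R R' hsa hode hpos hR
  have hsa0 := (hsa 0 le_rfl).1
  have hpos0 : ∀ v : E n, 0 ≤ (inner ℝ (A 0 v) v : ℝ) := fun v => (hpos 0 le_rfl v).1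
  have hRC : ‖R 0‖ ≤ C_R := (hR 0 ⟨le_rfl, zero_le_one⟩).2.1
  -- Cauchy–Schwarz type bound for `R 0`
  have bound : ∀ y z : E n, (inner ℝ (R 0 y) z : ℝ) ≤ CR * (‖y‖ * ‖z‖) := by
    intro y z
    calc (inner ℝ (R 0 y) z : ℝ) ≤ ‖R 0 y‖ * ‖z‖ := real_inner_le_norm _ _
    _ ≤ (‖R 0‖ * ‖y‖) * ‖z‖ := mul_le_mul_of_nonneg_right ((R 0).le_opNorm y) (norm_nonneg z)
    _ ≤ CR * (‖y‖ * ‖z‖) := by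
        rw [mul_assoc]
        exact mul_le_mul_of_nonneg_right (hRC.trans hCRle) (by positivity)
  -- ### Step 1: the scalar Riccati estimate
  have hscalar : ∀ x : E n, ‖x‖ = 1 →
      (inner ℝ (R 0 x) x : ℝ)^2 ≤ K₁ * inner ℝ (A 0 x) x := by
    intro x hx
    set r : ℝ := inner ℝ (R 0 x) x with hrdef
    have hr0 : 0 ≤ r := (hpos 0 le_rfl x).2
    have hrC : r ≤ C_R := by
      calc r ≤ ‖R 0 x‖ * ‖x‖ := real_inner_le_norm _ _
      _ = ‖R 0 x‖ := by rw [hx, mul_one]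
      _ ≤ ‖R 0‖ * ‖x‖ := (R 0).le_opNorm x
      _ = ‖R 0‖ := by rw [hx, mul_one]
      _ ≤ C_R := hRC
    rcases eq_or_lt_of_le hr0 with h0 | hrpos
    · rw [← h0]
      have h1 := (hpos 0 le_rfl x).1
      calc (0:ℝ)^2 = 0 := by norm_num
      _ ≤ _ := mul_nonneg hK₁pos.le h1
    have hRlip : ∀ s ∈ Icc (0:ℝ) 1, ‖R s - R 0‖ ≤ C_R' * s := by
      intro s hs
      have := Convex.norm_image_sub_le_of_norm_hasDerivWithin_le
        (f := R) (f' := R') (s := Icc (0:ℝ) 1) (C := C_R')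
        (fun t ht => ((hR t ht).1).hasDerivWithinAt)
        (fun t ht => (hR t ht).2.2) (convex_Icc 0 1) ⟨le_rfl, zero_le_one⟩ hs
      simpa [abs_of_nonneg hs.1] using this
    have hRlow : ∀ s ∈ Icc (0:ℝ) 1, r - C_R' * s ≤ (inner ℝ (R s x) x : ℝ) := by
      intro s hs
      have h1 : |(inner ℝ ((R s - R 0) x) x : ℝ)| ≤ C_R' * s := by
        calc |(inner ℝ ((R s - R 0) x) x : ℝ)| ≤ ‖(R s - R 0) x‖ * ‖x‖ :=
              abs_real_inner_le_norm _ _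
        _ = ‖(R s - R 0) x‖ := by rw [hx, mul_one]
        _ ≤ ‖R s - R 0‖ * ‖x‖ := (R s - R 0).le_opNorm x
        _ = ‖R s - R 0‖ := by rw [hx, mul_one]
        _ ≤ C_R' * s := hRlip s hs
      have h2 : (inner ℝ ((R s - R 0) x) x : ℝ) = (inner ℝ (R s x) x : ℝ) - r := by
        rw [hrdef, ContinuousLinearMap.sub_apply, inner_sub_left]
      have h3 := neg_le_of_abs_le h1
      rw [h2] at h3
      linarith
    set σ : ℝ := r / (CR * CR') with hσdef
    have hσpos : 0 < σ := div_pos hrpos (by positivity)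
    have hσ1 : σ ≤ 1 := by
      rw [hσdef, div_le_one (by positivity)]
      calc r ≤ C_R := hrC
      _ ≤ CR := hCRle
      _ ≤ CR * CR' := by nlinarith
    set ψ : ℝ → ℝ := fun s => (inner ℝ (A s x) x : ℝ) + r * s - C_R' * s^2 / 2 with hψdef
    have hψd : ∀ s : ℝ, 0 ≤ s →
        HasDerivAt ψ ((-(inner ℝ (A s x) (A s x) : ℝ) - (inner ℝ (R s x) x : ℝ))
          + (r - C_R' * s)) s := by
      intro s hs
      have hAx : HasDerivAt (fun t => A t x) ((-(A s ∘L A s) - R s) x) s :=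
        (hode s hs).clm_apply (hasDerivAt_const s x) |>.congr_deriv (by simp)
      have hin : HasDerivAt (fun t => (inner ℝ (A t x) x : ℝ))
          ((inner ℝ ((-(A s ∘L A s) - R s) x) x : ℝ)) s := by
        simpa using (HasDerivAt.inner ℝ hAx (hasDerivAt_const s x))
      have hval : (inner ℝ ((-(A s ∘L A s) - R s) x) x : ℝ)
          = -(inner ℝ (A s x) (A s x) : ℝ) - (inner ℝ (R s x) x : ℝ) := by
        rw [ContinuousLinearMap.sub_apply, ContinuousLinearMap.neg_apply,
          ContinuousLinearMap.comp_apply, inner_sub_left, inner_neg_left,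
          (hsa s hs).1 (A s x) x]
      rw [hval] at hin
      have h2 : HasDerivAt (fun s : ℝ => r * s) r s := by
        simpa using (hasDerivAt_id s).const_mul r
      have h3 : HasDerivAt (fun s : ℝ => C_R' * s^2 / 2) (C_R' * s) s := by
        have := ((hasDerivAt_pow 2 s).const_mul C_R').div_const 2
        simpa using this.congr_deriv (by ring)
      exact ((hin.add h2).sub h3).congr_deriv (by ring)
    have hanti : AntitoneOn ψ (Icc 0 σ) := by
      apply antitoneOn_of_deriv_nonpos (convex_Icc 0 σ)
      · intro s hs
        exact ((hψd s hs.1).continuousAt).continuousWithinAt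
      · rw [interior_Icc]
        intro s hs
        exact ((hψd s hs.1.le).differentiableAt).differentiableWithinAt
      · rw [interior_Icc]
        intro s hs
        rw [(hψd s hs.1.le).deriv]
        have h1 : 0 ≤ (inner ℝ (A s x) (A s x) : ℝ) := real_inner_self_nonneg
        have h2 := hRlow s ⟨hs.1.le, hs.2.le.trans hσ1⟩
        linarith
    have hψ0 : ψ 0 = (inner ℝ (A 0 x) x : ℝ) := by simp [hψdef]
    have key : r * σ - C_R' * σ^2 / 2 ≤ (inner ℝ (A 0 x) x : ℝ) := by
      have h1 := hanti ⟨le_rfl, hσpos.le⟩ ⟨hσpos.le, le_rfl⟩ hσpos.le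
      have h2 : 0 ≤ (inner ℝ (A σ x) x : ℝ) := (hpos σ hσpos.le x).1
      rw [hψ0] at h1
      simp only [hψdef] at h1
      linarith
    have hCR'le : C_R' ≤ CR' := le_max_left _ _
    have hσval : σ * (CR * CR') = r := by rw [hσdef]; exact div_mul_cancel₀ r (by positivity)
    have hr2 : r^2 = σ^2 * CR^2 * CR'^2 := by rw [← hσval]; ring
    have key2 : σ^2 * CR * CR' - CR' * σ^2 / 2 ≤ (inner ℝ (A 0 x) x : ℝ) := by
      have hrσ : r * σ = σ^2 * (CR * CR') := by rw [← hσval]; ring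
      nlinarith [mul_le_mul_of_nonneg_right hCR'le (sq_nonneg σ)]
    have key3 := mul_le_mul_of_nonneg_left key2 hK₁pos.le
    rw [hr2, hK₁def] at *
    nlinarith [key3, mul_nonneg (sub_nonneg.2 hCR1) (sq_nonneg (σ * CR * CR'))]
  -- homogeneous version of the scalar estimate
  have gen : ∀ t a p : ℝ, 0 < t → (t⁻¹*(t⁻¹*a))^2 ≤ K₁*(t⁻¹*(t⁻¹*p)) → a^2 ≤ K₁*t^2*p := by
    intro t a p ht hle
    have h2 := mul_le_mul_of_nonneg_left hle (pow_nonneg ht.le 4)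
    have e3 : t^4*((t⁻¹*(t⁻¹*a))^2) = a^2 := by
      field_simp
    have e4 : t^4*(K₁*(t⁻¹*(t⁻¹*p))) = K₁*t^2*p := by
      field_simp
    linarith
  have hscalar' : ∀ u : E n,
      (inner ℝ (R 0 u) u : ℝ)^2 ≤ K₁ * ‖u‖^2 * inner ℝ (A 0 u) u := by
    intro u
    rcases eq_or_ne u 0 with rfl | hune
    · simp
    have ht : 0 < ‖u‖ := norm_pos_iff.mpr hune
    have hx1 : ‖((‖u‖⁻¹:ℝ) • u : E n)‖ = 1 := norm_smul_inv_norm hune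
    have h := hscalar _ hx1
    have e1 : (inner ℝ (R 0 ((‖u‖⁻¹:ℝ) • u)) ((‖u‖⁻¹:ℝ) • u) : ℝ)
        = ‖u‖⁻¹ * (‖u‖⁻¹ * inner ℝ (R 0 u) u) := by
      rw [map_smul, real_inner_smul_left, real_inner_smul_right]
    have e2 : (inner ℝ (A 0 ((‖u‖⁻¹:ℝ) • u)) ((‖u‖⁻¹:ℝ) • u) : ℝ)
        = ‖u‖⁻¹ * (‖u‖⁻¹ * inner ℝ (A 0 u) u) := by
      rw [map_smul, real_inner_smul_left, real_inner_smul_right]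
    rw [e1, e2] at h
    exact gen ‖u‖ _ _ ht h
  -- ### Step 2: construction of the "capped" operator `A₀ = c • A(0) (1 + A(0))⁻¹`
  set T : E n →L[ℝ] E n := ContinuousLinearMap.id ℝ (E n) + A 0 with hT
  have hTapp : ∀ v, T v = v + A 0 v := fun v => rfl
  have hker : ∀ v, T v = 0 → v = 0 := by
    intro v hv
    have h1 : (inner ℝ (T v) v : ℝ) = 0 := by rw [hv]; exact inner_zero_left v
    have h2 : (inner ℝ (T v) v : ℝ) = ‖v‖^2 + inner ℝ (A 0 v) v := by
      rw [hTapp, inner_add_left, real_inner_self_eq_norm_sq]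
    have h3 : ‖v‖^2 ≤ 0 := by have := hpos0 v; linarith
    have h4 : ‖v‖ = 0 := by nlinarith [norm_nonneg v, sq_nonneg ‖v‖]
    exact norm_eq_zero.mp h4
  have hTinj : Function.Injective T := by
    intro a b hab
    have h := hker (a - b) (by rw [map_sub, hab, sub_self])
    exact sub_eq_zero.mp h
  set e : E n ≃L[ℝ] E n :=
    (LinearEquiv.ofInjectiveEndo (T : E n →ₗ[ℝ] E n) hTinj).toContinuousLinearEquiv with he
  set P : E n →L[ℝ] E n := (e.symm : E n →L[ℝ] E n) with hPdef
  have hP : ∀ v, P v + A 0 (P v) = v := by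
    intro v
    have h2 : e (P v) = P v + A 0 (P v) := rfl
    rw [← h2]
    exact e.apply_symm_apply _
  have hPT : ∀ u : E n, P (u + A 0 u) = u := by
    intro u
    exact e.symm_apply_apply u
  set A₀ : E n →L[ℝ] E n := c • ((A 0) ∘L P) with hA₀def
  have hA₀app : ∀ v, A₀ v = c • (A 0 (P v)) := fun v => rfl
  have hA₀exp : ∀ u : E n, A₀ (u + A 0 u) = c • A 0 u := by
    intro u
    rw [hA₀app, hPT]
  refine ⟨A₀, ?_, ?_, ?_, ?_⟩
  · -- self-adjointness
    intro v w
    obtain ⟨x, rfl⟩ : ∃ x : E n, x + A 0 x = v := ⟨P v, hP v⟩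
    obtain ⟨y, rfl⟩ : ∃ y : E n, y + A 0 y = w := ⟨P w, hP w⟩
    rw [hA₀exp x, hA₀exp y, real_inner_smul_left, real_inner_smul_right,
      inner_add_right, inner_add_left, hsa0 x y]
  · -- `A₀ ≤ A 0`
    intro v
    obtain ⟨u, rfl⟩ : ∃ u : E n, u + A 0 u = v := ⟨P v, hP v⟩
    rw [hA₀exp u, real_inner_smul_left, inner_add_right, map_add,
      inner_add_left, inner_add_right, inner_add_right]
    nlinarith [hsa0 (A 0 u) u, hpos0 u, hpos0 (A 0 u),
      (real_inner_self_nonneg : 0 ≤ (inner ℝ (A 0 u) (A 0 u) : ℝ)),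
      mul_nonneg (sub_nonneg.2 hc1)
        (add_nonneg (hpos0 u) (real_inner_self_nonneg : 0 ≤ (inner ℝ (A 0 u) (A 0 u) : ℝ)))]
  · -- `A₀ ≤ C_R · Id`
    intro v
    obtain ⟨u, rfl⟩ : ∃ u : E n, u + A 0 u = v := ⟨P v, hP v⟩
    rw [hA₀exp u, real_inner_smul_left, inner_add_right, ← real_inner_self_eq_norm_sq,
      inner_add_left, inner_add_right, inner_add_right]
    nlinarith [real_inner_comm u (A 0 u), hpos0 u,
      (real_inner_self_nonneg : 0 ≤ (inner ℝ (A 0 u) (A 0 u) : ℝ)),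
      (real_inner_self_nonneg : 0 ≤ (inner ℝ u u : ℝ)),
      mul_nonneg (sub_nonneg.2 hcC)
        (add_nonneg (hpos0 u) (real_inner_self_nonneg : 0 ≤ (inner ℝ (A 0 u) (A 0 u) : ℝ))),
      mul_nonneg hCR.le
        (add_nonneg (real_inner_self_nonneg : 0 ≤ (inner ℝ u u : ℝ)) (hpos0 u))]
  · -- the form estimate
    intro w hw
    obtain ⟨u, rfl⟩ : ∃ u : E n, u + A 0 u = w := ⟨P w, hP w⟩
    have hp0 : 0 ≤ (inner ℝ (A 0 u) u : ℝ) := hpos0 u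
    have hq0 : 0 ≤ (inner ℝ (A 0 u) (A 0 u) : ℝ) := real_inner_self_nonneg
    have ha0 : 0 ≤ (inner ℝ (R 0 u) u : ℝ) := (hpos 0 le_rfl u).2
    have huu0 : 0 ≤ (inner ℝ u u : ℝ) := real_inner_self_nonneg
    have hm0 : 0 ≤ ‖A 0 u‖ := norm_nonneg _
    have hqm : (inner ℝ (A 0 u) (A 0 u) : ℝ) = ‖A 0 u‖^2 := real_inner_self_eq_norm_sq _
    have hnw : (inner ℝ u u : ℝ) + 2 * (inner ℝ (A 0 u) u : ℝ)
        + (inner ℝ (A 0 u) (A 0 u) : ℝ) = 1 := by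
      have h8 : (inner ℝ (u + A 0 u) (u + A 0 u) : ℝ) = ‖u + A 0 u‖^2 :=
        real_inner_self_eq_norm_sq _
      rw [hw, one_pow] at h8
      rw [inner_add_left, inner_add_right, inner_add_right] at h8
      linarith [real_inner_comm u (A 0 u)]
    have huu : (inner ℝ u u : ℝ) = ‖u‖^2 := real_inner_self_eq_norm_sq _
    have hu2 : ‖u‖^2 ≤ 1 := by linarith
    have hu1 : ‖u‖ ≤ 1 := by nlinarith [norm_nonneg u]
    have hm2' : ‖A 0 u‖^2 ≤ 1 := by linarith
    have hm1 : ‖A 0 u‖ ≤ 1 := by nlinarith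
    -- the scalar estimate applied to `u`
    have hscal : (inner ℝ (R 0 u) u : ℝ)^2
        ≤ K₁ * ((inner ℝ (A 0 u) u : ℝ) + (inner ℝ (A 0 u) (A 0 u) : ℝ)) := by
      have h := hscalar' u
      nlinarith [mul_nonneg (mul_nonneg hK₁pos.le hp0) (sub_nonneg.2 hu2),
        mul_nonneg hK₁pos.le hq0]
    -- expansion and bound of `r`
    have hrexp : (inner ℝ (R 0 (u + A 0 u)) (u + A 0 u) : ℝ)
        = (inner ℝ (R 0 u) u : ℝ) + (inner ℝ (R 0 u) (A 0 u) : ℝ)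
          + (inner ℝ (R 0 (A 0 u)) u : ℝ) + (inner ℝ (R 0 (A 0 u)) (A 0 u) : ℝ) := by
      rw [map_add, inner_add_left, inner_add_right, inner_add_right]
      ring
    have c1 : ‖u‖ * ‖A 0 u‖ ≤ ‖A 0 u‖ := by
      nlinarith [mul_nonneg (sub_nonneg.2 hu1) hm0]
    have c2 : ‖A 0 u‖ * ‖A 0 u‖ ≤ ‖A 0 u‖ := by
      nlinarith [mul_nonneg (sub_nonneg.2 hm1) hm0]
    have d1 : (inner ℝ (R 0 u) (A 0 u) : ℝ) ≤ CR * ‖A 0 u‖ :=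
      (bound u (A 0 u)).trans (mul_le_mul_of_nonneg_left c1 hCRpos.le)
    have d2 : (inner ℝ (R 0 (A 0 u)) u : ℝ) ≤ CR * ‖A 0 u‖ :=
      (bound (A 0 u) u).trans
        (mul_le_mul_of_nonneg_left (by rw [mul_comm]; exact c1) hCRpos.le)
    have d3 : (inner ℝ (R 0 (A 0 u)) (A 0 u) : ℝ) ≤ CR * ‖A 0 u‖ :=
      (bound (A 0 u) (A 0 u)).trans (mul_le_mul_of_nonneg_left c2 hCRpos.le)
    have hrle : (inner ℝ (R 0 (u + A 0 u)) (u + A 0 u) : ℝ)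
        ≤ (inner ℝ (R 0 u) u : ℝ) + 3 * CR * ‖A 0 u‖ := by
      rw [hrexp]; linarith
    have hr0 : 0 ≤ (inner ℝ (R 0 (u + A 0 u)) (u + A 0 u) : ℝ) := (hpos 0 le_rfl _).2
    have hab : 0 ≤ (inner ℝ (R 0 u) u : ℝ) + 3 * CR * ‖A 0 u‖ := by positivity
    have h1 : (inner ℝ (R 0 (u + A 0 u)) (u + A 0 u) : ℝ)^2
        ≤ ((inner ℝ (R 0 u) u : ℝ) + 3 * CR * ‖A 0 u‖)^2 := pow_le_pow_left₀ hr0 hrle 2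
    have hmpq : ‖A 0 u‖^2 ≤ (inner ℝ (A 0 u) u : ℝ) + (inner ℝ (A 0 u) (A 0 u) : ℝ) := by
      linarith
    have h2 := mul_le_mul_of_nonneg_left hmpq (show (0:ℝ) ≤ 18*CR^2 by positivity)
    have hrsq : (inner ℝ (R 0 (u + A 0 u)) (u + A 0 u) : ℝ)^2
        ≤ K₂ * ((inner ℝ (A 0 u) u : ℝ) + (inner ℝ (A 0 u) (A 0 u) : ℝ)) := by
      have expand : ((inner ℝ (R 0 u) u : ℝ) + 3 * CR * ‖A 0 u‖)^2
          ≤ 2 * (inner ℝ (R 0 u) u : ℝ)^2 + 18 * CR^2 * ‖A 0 u‖^2 := by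
        nlinarith [sq_nonneg ((inner ℝ (R 0 u) u : ℝ) - 3 * CR * ‖A 0 u‖)]
      have hKS : K₂ * ((inner ℝ (A 0 u) u : ℝ) + (inner ℝ (A 0 u) (A 0 u) : ℝ))
          = 2 * (K₁ * ((inner ℝ (A 0 u) u : ℝ) + (inner ℝ (A 0 u) (A 0 u) : ℝ)))
            + 18 * CR^2 * ((inner ℝ (A 0 u) u : ℝ) + (inner ℝ (A 0 u) (A 0 u) : ℝ)) := by
        rw [hK₂def]; ring
      linarith [h1, expand, hscal, h2, hKS]
    have hA0w : (inner ℝ (A₀ (u + A 0 u)) (u + A 0 u) : ℝ)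
        = c * ((inner ℝ (A 0 u) u : ℝ) + (inner ℝ (A 0 u) (A 0 u) : ℝ)) := by
      rw [hA₀exp u, real_inner_smul_left, inner_add_right]
    rw [hA0w]
    have hK2 : K₂ ≠ 0 := ne_of_gt hK₂pos
    have e5 : c / K₂ * K₂ = c := div_mul_cancel₀ c hK2
    calc c / K₂ * (inner ℝ (R 0 (u + A 0 u)) (u + A 0 u) : ℝ)^2
        ≤ c / K₂ * (K₂ * ((inner ℝ (A 0 u) u : ℝ) + (inner ℝ (A 0 u) (A 0 u) : ℝ))) :=
          mul_le_mul_of_nonneg_left hrsq (by positivity)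
    _ = (c / K₂ * K₂) * ((inner ℝ (A 0 u) u : ℝ) + (inner ℝ (A 0 u) (A 0 u) : ℝ)) := by ring
    _ = c * ((inner ℝ (A 0 u) u : ℝ) + (inner ℝ (A 0 u) (A 0 u) : ℝ)) := by rw [e5]
end
end

section
/- Let A(s) be a self-adjoint-endomorphism-valued solution of the Riccati equation A′(s) + A(s)² + R(s) = 0 on ℝⁿ, with |R(s)| ≤ C_R and |R′(s)| ≤ C_{R′} for small s ≥ 0. Suppose there exist ε₀ > 0 and a self-adjoint A₀ with A(0) ≥ A₀, A₀ ≤ C_R·Id, and ⟨A₀w, w⟩ ≥ ε₀ ⟨R(0)w, w⟩² for all unit vectors w. Then there exist s₀ = s₀(C_R) > 0 and C = C(C_R, C_{R′}, ε₀) > 0 such that A(s) ≥ −C s² · Id for all s ∈ (0, s₀]. -/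
open Set

noncomputable section

-- PSD Cauchy-Schwarz
lemma psd_cs {n : ℕ} {S : E n →L[ℝ] E n} (hS : SelfAdj S)
    (h0 : ∀ w : E n, (0:ℝ) ≤ inner ℝ (S w) w) (x y : E n) :
    (inner ℝ (S x) y : ℝ)^2 ≤ (inner ℝ (S x) x : ℝ) * (inner ℝ (S y) y : ℝ) := by
  set p : ℝ := inner ℝ (S x) y with hp
  set a : ℝ := inner ℝ (S x) x with ha
  set b : ℝ := inner ℝ (S y) y with hb
  have key : ∀ t : ℝ, 0 ≤ a + 2*t*p + t^2*b := by
    intro t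
    have h := h0 (x + t • y)
    have expand : (inner ℝ (S (x + t • y)) (x + t • y) : ℝ) = a + 2*t*p + t^2*b := by
      have hSyx : (inner ℝ (S y) x : ℝ) = p := by
        rw [hp, hS y x, real_inner_comm]
      simp only [map_add, map_smul, inner_add_left, inner_add_right,
        real_inner_smul_left, real_inner_smul_right]
      rw [hSyx]
      ring
    rw [expand] at h
    exact h
  have hbnn : 0 ≤ b := h0 y
  rcases eq_or_lt_of_le hbnn with hb0 | hbpos
  · -- b = 0 : need p = 0
    have hp0 : p = 0 := by
      by_contra hne
      have h1 := key (-(a+1)/(2*p))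
      rw [← hb0] at h1
      have : (0:ℝ) ≤ a + 2 * (-(a+1)/(2*p)) * p := by linarith [h1]
      have h2 : 2 * (-(a+1)/(2*p)) * p = -(a+1) := by field_simp
      rw [h2] at this
      have hann : 0 ≤ a := h0 x
      linarith
    rw [hp0, ← hb0]
    have hann : 0 ≤ a := h0 x
    nlinarith
  · have h1 := key (-p/b)
    have h2 : a + 2 * (-p/b) * p + (-p/b)^2 * b = a - p^2/b := by
      field_simp; ring
    rw [h2] at h1
    have := mul_le_mul_of_nonneg_right h1 (le_of_lt hbpos)
    rw [sub_mul, div_mul_cancel₀] at this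
    · nlinarith
    · exact ne_of_gt hbpos

lemma psd_apply_eq_zero {n : ℕ} {S : E n →L[ℝ] E n} (hS : SelfAdj S)
    (h0 : ∀ w : E n, (0:ℝ) ≤ inner ℝ (S w) w) {x : E n}
    (hx : (inner ℝ (S x) x : ℝ) = 0) : S x = 0 := by
  have h := psd_cs hS h0 x (S x)
  rw [hx, zero_mul] at h
  have h2 : (inner ℝ (S x) (S x) : ℝ) = ‖S x‖^2 := real_inner_self_eq_norm_sq _
  rw [h2] at h
  have : ‖S x‖^2 = 0 := by nlinarith [sq_nonneg (‖S x‖^2), norm_nonneg (S x)]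
  have := pow_eq_zero_iff (n := 2) (by norm_num) |>.mp this
  exact norm_eq_zero.mp this

-- for 0 ≤ S ≤ c : ‖S v‖² ≤ c ⟨S v, v⟩  and  ‖S v‖ ≤ c ‖v‖
lemma psd_norm_apply_sq_le {n : ℕ} {S : E n →L[ℝ] E n} {c : ℝ} (hS : SelfAdj S)
    (h0 : ∀ w : E n, (0:ℝ) ≤ inner ℝ (S w) w)
    (hc : ∀ w : E n, (inner ℝ (S w) w : ℝ) ≤ c * ‖w‖^2) (hcnn : 0 ≤ c) (v : E n) :
    ‖S v‖^2 ≤ c * (inner ℝ (S v) v : ℝ) := by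
  have h := psd_cs hS h0 v (S v)
  have h2 : (inner ℝ (S v) (S v) : ℝ) = ‖S v‖^2 := real_inner_self_eq_norm_sq _
  rw [h2] at h
  have h3 : (inner ℝ (S (S v)) (S v) : ℝ) ≤ c * ‖S v‖^2 := hc (S v)
  rcases eq_or_ne (S v) 0 with h4 | h4
  · rw [h4]; simp [mul_nonneg hcnn (h0 v)]
  · have hnp : (0:ℝ) < ‖S v‖ := norm_pos_iff.mpr h4
    have hpos : (0:ℝ) < ‖S v‖^2 := pow_pos hnp 2
    have h5 : (‖S v‖^2)^2 ≤ (inner ℝ (S v) v : ℝ) * (c * ‖S v‖^2) := by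
      calc (‖S v‖^2)^2 ≤ (inner ℝ (S v) v : ℝ) * (inner ℝ (S (S v)) (S v) : ℝ) := h
        _ ≤ (inner ℝ (S v) v : ℝ) * (c * ‖S v‖^2) := by
            apply mul_le_mul_of_nonneg_left h3 (h0 v)
    nlinarith [h0 v]

lemma psd_norm_apply_le {n : ℕ} {S : E n →L[ℝ] E n} {c : ℝ} (hS : SelfAdj S)
    (h0 : ∀ w : E n, (0:ℝ) ≤ inner ℝ (S w) w)
    (hc : ∀ w : E n, (inner ℝ (S w) w : ℝ) ≤ c * ‖w‖^2) (hcnn : 0 ≤ c) (v : E n) :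
    ‖S v‖ ≤ c * ‖v‖ := by
  have h := psd_norm_apply_sq_le hS h0 hc hcnn v
  have h2 : (inner ℝ (S v) v : ℝ) ≤ c * ‖v‖^2 := hc v
  have h3 : ‖S v‖^2 ≤ (c * ‖v‖)^2 := by nlinarith
  nlinarith [norm_nonneg (S v), mul_nonneg hcnn (norm_nonneg v),
    sq_nonneg (‖S v‖ - c*‖v‖), sq_nonneg (‖S v‖ + c*‖v‖)]


-- derivative of quadratic form along operator-valued curve
lemma hasDerivAt_form {n : ℕ} {A : ℝ → (E n →L[ℝ] E n)} {A' : E n →L[ℝ] E n} {s : ℝ}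
    (h : HasDerivAt A A' s) (v : E n) :
    HasDerivAt (fun t => (inner ℝ (A t v) v : ℝ)) ((inner ℝ (A' v) v : ℝ)) s := by
  have h1 : HasDerivAt (fun t => (A t) v) (A' v) s := by
    have := h.clm_apply (hasDerivAt_const s v)
    simpa using this
  have h2 := h1.inner ℝ (hasDerivAt_const s v)
  simpa using h2

-- if f ≥ 0 to the left of T, f T = 0, f differentiable at T, then f'(T) ≤ 0
lemma deriv_nonpos_of_left {f : ℝ → ℝ} {d T t₀ : ℝ} (hT : t₀ < T)
    (hf : HasDerivAt f d T) (hnon : ∀ t, t₀ ≤ t → t < T → 0 ≤ f t)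
    (hfT : f T = 0) : d ≤ 0 := by
  have hs := hasDerivAt_iff_tendsto_slope.mp hf
  have hmono : (nhdsWithin T (Iio T)) ≤ (nhdsWithin T {T}ᶜ) :=
    nhdsWithin_mono _ (fun x hx => ne_of_lt hx)
  have hs2 : Filter.Tendsto (slope f T) (nhdsWithin T (Iio T)) (nhds d) :=
    hs.mono_left hmono
  have hev : ∀ᶠ t in nhdsWithin T (Iio T), slope f T t ≤ 0 := by
    filter_upwards [Ioo_mem_nhdsLT_of_mem (Set.mem_Ioc.mpr ⟨hT, le_refl T⟩)] with t ht
    have h1 : 0 ≤ f t := hnon t (le_of_lt ht.1) ht.2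
    have h2 : t - T < 0 := by linarith [ht.2]
    rw [slope_def_field]
    rw [div_nonpos_iff]
    left
    constructor
    · rw [hfT]; linarith
    · linarith
  exact le_of_tendsto hs2 hev

-- first crossing
lemma first_crossing {g : ℝ → ℝ} {l r : ℝ} (hlr : l ≤ r)
    (hg : ContinuousOn g (Icc l r)) (h0 : 0 < g l)
    (hbad : ∃ t ∈ Icc l r, g t ≤ 0) :
    ∃ T ∈ Ioc l r, g T = 0 ∧ ∀ t, l ≤ t → t < T → 0 < g t := by
  set S := {t ∈ Icc l r | g t ≤ 0} with hSdef
  have hScl : IsClosed S := by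
    have := hg.preimage_isClosed_of_isClosed isClosed_Icc (isClosed_Iic (a := (0:ℝ)))
    exact this
  have hSne : S.Nonempty := by
    obtain ⟨t, ht, hgt⟩ := hbad; exact ⟨t, ht, hgt⟩
  have hSbdd : BddBelow S := ⟨l, fun x hx => hx.1.1⟩
  set T := sInf S with hTdef
  have hTS : T ∈ S := hScl.csInf_mem hSne hSbdd
  have hTl : l < T := by
    rcases lt_or_eq_of_le hTS.1.1 with h | h
    · exact h
    · exfalso; rw [← h] at hTS; linarith [hTS.2]
  have hlow : ∀ t, l ≤ t → t < T → 0 < g t := by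
    intro t htl htT
    by_contra hcon
    push_neg at hcon
    have : t ∈ S := ⟨⟨htl, le_trans (le_of_lt htT) hTS.1.2⟩, hcon⟩
    have := csInf_le hSbdd this
    linarith
  refine ⟨T, ⟨hTl, hTS.1.2⟩, ?_, hlow⟩
  -- g T = 0
  refine le_antisymm hTS.2 ?_
  have hcw : ContinuousWithinAt g (Icc l r) T := hg T hTS.1
  have hsub : Ico l T ⊆ Icc l r := fun x hx => ⟨hx.1, le_trans (le_of_lt hx.2) hTS.1.2⟩
  have htend : Filter.Tendsto g (nhdsWithin T (Ico l T)) (nhds (g T)) :=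
    hcw.mono_left (nhdsWithin_mono _ hsub)
  have hNB : (nhdsWithin T (Ico l T)).NeBot := by
    rw [← mem_closure_iff_nhdsWithin_neBot, closure_Ico (ne_of_lt hTl)]
    exact ⟨le_of_lt hTl, le_refl T⟩
  exact ge_of_tendsto htend (Filter.eventually_of_mem self_mem_nhdsWithin
    (fun t ht => le_of_lt (hlow t ht.1 ht.2)))

def sphereSet (n : ℕ) : Set (E n) := {v : E n | ‖v‖ = 1}

def formSet {n : ℕ} (W : E n →L[ℝ] E n) : Set ℝ :=
  (fun v => (inner ℝ (W v) v : ℝ)) '' sphereSet n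

def minForm {n : ℕ} (W : E n →L[ℝ] E n) : ℝ := sInf (formSet W)

lemma sphere_compact (n : ℕ) : IsCompact (sphereSet n) := by
  have : sphereSet n = Metric.sphere (0 : E n) 1 := by
    ext v; simp [sphereSet, mem_sphere_zero_iff_norm]
  rw [this]
  exact isCompact_sphere _ _

lemma form_continuous {n : ℕ} (W : E n →L[ℝ] E n) :
    Continuous (fun v : E n => (inner ℝ (W v) v : ℝ)) := by
  exact (W.continuous.inner continuous_id)

lemma formSet_bddBelow {n : ℕ} (W : E n →L[ℝ] E n) : BddBelow (formSet W) := by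
  refine ⟨-‖W‖, ?_⟩
  rintro x ⟨v, hv, rfl⟩
  have h1 : |(inner ℝ (W v) v : ℝ)| ≤ ‖W v‖ * ‖v‖ := abs_real_inner_le_norm _ _
  have h2 : ‖W v‖ ≤ ‖W‖ * ‖v‖ := W.le_opNorm v
  have hv1 : ‖v‖ = 1 := hv
  rw [hv1, mul_one] at h1 h2
  linarith [abs_le.mp h1]

lemma exists_minimizer {n : ℕ} (W : E n →L[ℝ] E n) (hne : ∃ u : E n, ‖u‖ = 1) :
    ∃ w : E n, ‖w‖ = 1 ∧ (inner ℝ (W w) w : ℝ) = minForm W ∧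
      ∀ y : E n, ‖y‖ = 1 → minForm W ≤ (inner ℝ (W y) y : ℝ) := by
  obtain ⟨u, hu⟩ := hne
  have hSne : (sphereSet n).Nonempty := ⟨u, hu⟩
  obtain ⟨w, hwS, hwmin'⟩ := (sphere_compact n).exists_isMinOn hSne
    (form_continuous W).continuousOn
  have hwmin : ∀ y ∈ sphereSet n, (inner ℝ (W w) w : ℝ) ≤ (inner ℝ (W y) y : ℝ) :=
    fun y hy => hwmin' hy
  have hmem : (inner ℝ (W w) w : ℝ) ∈ formSet W := ⟨w, hwS, rfl⟩
  have heq : minForm W = (inner ℝ (W w) w : ℝ) := by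
    refine le_antisymm (csInf_le (formSet_bddBelow W) hmem) ?_
    apply le_csInf ⟨_, hmem⟩
    rintro b ⟨y, hy, rfl⟩
    exact hwmin y hy
  exact ⟨w, hwS, heq.symm, fun y hy => heq ▸ hwmin y hy⟩

lemma minForm_le {n : ℕ} (W : E n →L[ℝ] E n) {v : E n} (hv : ‖v‖ = 1) :
    minForm W ≤ (inner ℝ (W v) v : ℝ) :=
  csInf_le (formSet_bddBelow W) ⟨v, hv, rfl⟩

lemma minForm_lipschitz {n : ℕ} (hne : ∃ u : E n, ‖u‖ = 1)
    (W₁ W₂ : E n →L[ℝ] E n) : |minForm W₁ - minForm W₂| ≤ ‖W₁ - W₂‖ := by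
  have key : ∀ V₁ V₂ : E n →L[ℝ] E n, minForm V₁ - minForm V₂ ≤ ‖V₁ - V₂‖ := by
    intro V₁ V₂
    obtain ⟨w, hw, hweq, -⟩ := exists_minimizer V₂ hne
    have h1 : minForm V₁ ≤ (inner ℝ (V₁ w) w : ℝ) := minForm_le V₁ hw
    have h2 : (inner ℝ (V₁ w) w : ℝ) - (inner ℝ (V₂ w) w : ℝ) ≤ ‖V₁ - V₂‖ := by
      have h3 : (inner ℝ (V₁ w) w : ℝ) - (inner ℝ (V₂ w) w : ℝ)
          = (inner ℝ ((V₁ - V₂) w) w : ℝ) := by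
        simp [ContinuousLinearMap.sub_apply, inner_sub_left]
      rw [h3]
      have h4 : |(inner ℝ ((V₁ - V₂) w) w : ℝ)| ≤ ‖(V₁ - V₂) w‖ * ‖w‖ :=
        abs_real_inner_le_norm _ _
      have h5 : ‖(V₁ - V₂) w‖ ≤ ‖V₁ - V₂‖ * ‖w‖ := (V₁ - V₂).le_opNorm w
      rw [hw, mul_one] at h4 h5
      linarith [abs_le.mp h4]
    linarith [hweq]
  rw [abs_sub_le_iff]
  constructor
  · exact key W₁ W₂
  · rw [← norm_neg, neg_sub]; exact key W₂ W₁

lemma minForm_continuousOn {n : ℕ} (hne : ∃ u : E n, ‖u‖ = 1)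
    {U : ℝ → E n →L[ℝ] E n} {s : Set ℝ} (hU : ContinuousOn U s) :
    ContinuousOn (fun t => minForm (U t)) s := by
  have hlip : LipschitzWith 1 (minForm (n := n)) := by
    apply LipschitzWith.of_dist_le_mul
    intro x y
    rw [NNReal.coe_one, one_mul]
    rw [Real.dist_eq, dist_eq_norm]
    exact minForm_lipschitz hne x y
  exact hlip.continuous.comp_continuousOn hU

lemma selfAdj_sub {n : ℕ} {S T : E n →L[ℝ] E n} (hS : SelfAdj S) (hT : SelfAdj T) :
    SelfAdj (S - T) := by
  intro v w
  simp only [ContinuousLinearMap.sub_apply, inner_sub_left, inner_sub_right, hS v w, hT v w]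

lemma selfAdj_add {n : ℕ} {S T : E n →L[ℝ] E n} (hS : SelfAdj S) (hT : SelfAdj T) :
    SelfAdj (S + T) := by
  intro v w
  simp only [ContinuousLinearMap.add_apply, inner_add_left, inner_add_right, hS v w, hT v w]

lemma selfAdj_smul_one {n : ℕ} (c : ℝ) : SelfAdj (c • (1 : E n →L[ℝ] E n)) := by
  intro v w
  simp only [ContinuousLinearMap.smul_apply, ContinuousLinearMap.one_apply,
    real_inner_smul_left, real_inner_smul_right]

lemma selfAdj_smul {n : ℕ} (c : ℝ) {S : E n →L[ℝ] E n} (hS : SelfAdj S) :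
    SelfAdj (c • S) := by
  intro v w
  simp only [ContinuousLinearMap.smul_apply, real_inner_smul_left,
    real_inner_smul_right, hS v w]

lemma selfAdj_comp_self {n : ℕ} {S : E n →L[ℝ] E n} (hS : SelfAdj S) :
    SelfAdj (S ∘L S) := by
  intro v w
  simp only [ContinuousLinearMap.comp_apply]
  rw [hS (S v) w, hS v (S w)]


-- quadratic form derivative identity at a point, plus basic bounds
lemma form_deriv_bound {n : ℕ} {A R : ℝ → E n →L[ℝ] E n} {c₀ : ℝ} {s : ℝ}
    (hSA : SelfAdj (A s)) (hRb : ‖R s‖ ≤ c₀) {v : E n} (hv : ‖v‖ = 1) :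
    (inner ℝ ((-(A s ∘L A s) - R s) v) v : ℝ)
      ≤ -((inner ℝ (A s v) v : ℝ))^2 + c₀ := by
  have h1 : (inner ℝ ((-(A s ∘L A s) - R s) v) v : ℝ)
      = -(inner ℝ ((A s) ((A s) v)) v : ℝ) - (inner ℝ (R s v) v : ℝ) := by
    simp [ContinuousLinearMap.sub_apply, ContinuousLinearMap.neg_apply,
      ContinuousLinearMap.comp_apply, inner_sub_left, inner_neg_left]
  have h2 : (inner ℝ ((A s) ((A s) v)) v : ℝ) = ‖(A s) v‖^2 := by
    rw [hSA ((A s) v) v, real_inner_comm, real_inner_self_eq_norm_sq]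
  have h3 : |(inner ℝ (A s v) v : ℝ)| ≤ ‖(A s) v‖ := by
    have := abs_real_inner_le_norm ((A s) v) v
    rwa [hv, mul_one] at this
  have h4 : |(inner ℝ (R s v) v : ℝ)| ≤ c₀ := by
    have h5 := abs_real_inner_le_norm ((R s) v) v
    rw [hv, mul_one] at h5
    have h6 : ‖(R s) v‖ ≤ ‖R s‖ * ‖v‖ := (R s).le_opNorm v
    rw [hv, mul_one] at h6
    linarith
  rw [h1, h2]
  have h7 : ((inner ℝ (A s v) v : ℝ))^2 ≤ ‖(A s) v‖^2 := by
    nlinarith [abs_nonneg (inner ℝ (A s v) v : ℝ), le_abs_self (inner ℝ (A s v) v : ℝ),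
      neg_abs_le (inner ℝ (A s v) v : ℝ)]
  have h8 := abs_le.mp h4
  linarith

-- P1 : uniform lower bound
lemma uniform_lower {n : ℕ} {c₀ : ℝ} (hc₀ : 0 ≤ c₀) {A R : ℝ → E n →L[ℝ] E n}
    (hSA : ∀ s ∈ Icc (0:ℝ) 1, SelfAdj (A s))
    (hODE : ∀ s ∈ Icc (0:ℝ) 1, HasDerivAt A (-(A s ∘L A s) - R s) s)
    (hRb : ∀ s ∈ Icc (0:ℝ) 1, ‖R s‖ ≤ c₀)
    {t₀ : ℝ} (ht₀ : t₀ ∈ Icc (0:ℝ) (1/2)) {v : E n} (hv : ‖v‖ = 1) :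
    -(c₀+3) ≤ (inner ℝ (A t₀ v) v : ℝ) := by
  by_contra hcon
  push_neg at hcon
  set K := c₀ + 1 with hK
  have hK1 : 1 ≤ K := by linarith
  set a := fun t => (inner ℝ (A t v) v : ℝ) with hadef
  have ht₀1 : t₀ ∈ Icc (0:ℝ) 1 := ⟨ht₀.1, by linarith [ht₀.2]⟩
  have hacont : ContinuousOn a (Icc (0:ℝ) 1) := fun s hs =>
    (hasDerivAt_form (hODE s hs) v).continuousAt.continuousWithinAt
  obtain ⟨M0, hM0⟩ := isCompact_Icc.exists_bound_of_continuousOn hacont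
  set M := max M0 0 with hM
  have hMnn : 0 ≤ M := le_max_right _ _
  have haM : ∀ x ∈ Icc (0:ℝ) 1, |a x| ≤ M :=
    fun x hx => le_trans (hM0 x hx) (le_max_left _ _)
  set s₁ := 1 - 1/(M + K + 2) with hs₁
  have hden : 0 < M + K + 2 := by linarith
  have hfrac : 1/(M + K + 2) ≤ 1/3 := by
    apply div_le_div_of_nonneg_left (by norm_num) (by norm_num) (by linarith)
  have hfracpos : 0 < 1/(M + K + 2) := by positivity
  have hs₁lt : s₁ < 1 := by rw [hs₁]; linarith
  have hs₁ge : (2:ℝ)/3 ≤ s₁ := by rw [hs₁]; linarith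
  have ht₀s₁ : t₀ < s₁ := lt_of_le_of_lt ht₀.2 (by linarith)
  set ψ := fun s : ℝ => -(1-s)⁻¹ - K with hψ
  set h := fun s => ψ s - a s with hh
  -- h t₀ > 0
  have hinv_t₀ : (1-t₀)⁻¹ ≤ 2 := by
    rw [inv_le_comm₀ (by linarith [ht₀.2] : (0:ℝ) < 1 - t₀) (by norm_num)]
    linarith [ht₀.2]
  have hht₀ : 0 < h t₀ := by
    have : ψ t₀ ≥ -(c₀+3) := by
      rw [hψ]; simp only []; rw [hK]; linarith
    simp only [hh]; linarith [hcon]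
  -- h s₁ < 0
  have hs₁Icc : s₁ ∈ Icc (0:ℝ) 1 := ⟨le_trans (by norm_num : (0:ℝ) ≤ 2/3) hs₁ge, le_of_lt hs₁lt⟩
  have hinv_s₁ : (1-s₁)⁻¹ = M + K + 2 := by
    rw [hs₁]; field_simp; ring
  have hhs₁ : h s₁ ≤ 0 := by
    have h1 : ψ s₁ = -(M + K + 2) - K := by rw [hψ]; simp only []; rw [hinv_s₁]
    have h2 : -M ≤ a s₁ := by linarith [abs_le.mp (haM s₁ hs₁Icc)]
    simp only [hh]; rw [h1]; linarith
  -- continuity of h on [t₀, s₁]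
  have hsub : Icc t₀ s₁ ⊆ Icc (0:ℝ) 1 :=
    fun x hx => ⟨le_trans ht₀.1 hx.1, le_trans hx.2 (le_of_lt hs₁lt)⟩
  have hψcont : ContinuousOn ψ (Icc t₀ s₁) := by
    apply ContinuousOn.sub
    · apply ContinuousOn.neg
      apply ContinuousOn.inv₀
      · exact (continuous_const.sub continuous_id).continuousOn
      · intro x hx
        have : x ≤ s₁ := hx.2
        have : x < 1 := lt_of_le_of_lt this hs₁lt
        intro hzero
        have : (1:ℝ) - x > 0 := by linarith
        linarith [hzero]
    · exact continuousOn_const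
  have hhcont : ContinuousOn h (Icc t₀ s₁) :=
    hψcont.sub (hacont.mono hsub)
  obtain ⟨T, hTmem, hT0, hTpos⟩ := first_crossing (le_of_lt ht₀s₁) hhcont hht₀ ⟨s₁, ⟨le_of_lt ht₀s₁, le_refl _⟩, hhs₁⟩
  have hT1 : T ∈ Icc (0:ℝ) 1 := hsub ⟨le_of_lt hTmem.1, hTmem.2⟩
  have hT1' : T < 1 := lt_of_le_of_lt hTmem.2 hs₁lt
  have hTpos' : (0:ℝ) < 1 - T := by linarith
  -- derivative of ψ at T
  have hψder : HasDerivAt ψ (-(1/(1-T)^2)) T := by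
    have h1 : HasDerivAt (fun s : ℝ => 1 - s) (-1) T := by
      exact (hasDerivAt_id' T).const_sub (1:ℝ)
    have h2 := h1.inv (ne_of_gt hTpos')
    have h3 := h2.neg.sub_const K
    refine h3.congr_deriv ?_
    ring
  have hader := hasDerivAt_form (hODE T hT1) v
  have hhder : HasDerivAt h (-(1/(1-T)^2) - (inner ℝ ((-(A T ∘L A T) - R T) v) v : ℝ)) T :=
    hψder.sub hader
  have hd := deriv_nonpos_of_left hTmem.1 hhder (fun t ht1 ht2 => le_of_lt (hTpos t ht1 ht2)) hT0
  -- contradiction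
  have hval : a T = ψ T := by
    have : h T = 0 := hT0
    simp only [hh] at this; linarith
  have hbd := form_deriv_bound (hSA T hT1) (hRb T hT1) hv
  have hψT : ψ T = -(1-T)⁻¹ - K := rfl
  have hsq : (a T)^2 = (1-T)⁻¹^2 + 2*K*(1-T)⁻¹ + K^2 := by
    rw [hval, hψT]; ring
  have hinvpos : (0:ℝ) < (1-T)⁻¹ := inv_pos.mpr hTpos'
  have hinvsq : (1/(1-T)^2) = (1-T)⁻¹^2 := by
    field_simp
  rw [hinvsq] at hd
  -- hd : -(1-T)⁻¹^2 - da ≤ 0, hbd : da ≤ -(a T)^2 + c₀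
  nlinarith [hd, hbd, hsq, hinvpos, hK1]

-- constants
def xx (c₀ : ℝ) : ℝ := c₀ + c₀^2
def LL (c₀ c₁ : ℝ) : ℝ := c₁ + c₀*(xx c₀ + 1) + (xx c₀ + 1)^2 + 1
def GG (c₀ : ℝ) : ℝ := 4*c₀ + 9
def ττ (c₀ c₁ : ℝ) : ℝ := 1/(GG c₀ + LL c₀ c₁ + 2*c₀ + 2)

lemma xx_nonneg {c₀ : ℝ} (h : 0 ≤ c₀) : 0 ≤ xx c₀ := by unfold xx; positivity
lemma LL_ge_one {c₀ c₁ : ℝ} (h0 : 0 ≤ c₀) (h1 : 0 ≤ c₁) : 1 ≤ LL c₀ c₁ := by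
  have := xx_nonneg h0; unfold LL; nlinarith
lemma GG_ge_nine {c₀ : ℝ} (h : 0 ≤ c₀) : 9 ≤ GG c₀ := by unfold GG; linarith
lemma ττ_pos {c₀ c₁ : ℝ} (h0 : 0 ≤ c₀) (h1 : 0 ≤ c₁) : 0 < ττ c₀ c₁ := by
  have := LL_ge_one h0 h1; have := GG_ge_nine h0; unfold ττ; positivity
lemma denom_pos {c₀ c₁ : ℝ} (h0 : 0 ≤ c₀) (h1 : 0 ≤ c₁) :
    0 < GG c₀ + LL c₀ c₁ + 2*c₀ + 2 := by
  have := LL_ge_one h0 h1; have := GG_ge_nine h0; linarith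
lemma ττ_mul_LL_le {c₀ c₁ : ℝ} (h0 : 0 ≤ c₀) (h1 : 0 ≤ c₁) : ττ c₀ c₁ * LL c₀ c₁ ≤ 1 := by
  have hd := denom_pos h0 h1
  have h2 := LL_ge_one h0 h1; have h3 := GG_ge_nine h0
  rw [ττ, div_mul_eq_mul_div, one_mul, div_le_one hd]; linarith
lemma ττ_mul_GG_le {c₀ c₁ : ℝ} (h0 : 0 ≤ c₀) (h1 : 0 ≤ c₁) : ττ c₀ c₁ * GG c₀ ≤ 1 := by
  have hd := denom_pos h0 h1
  have h2 := LL_ge_one h0 h1; have h3 := GG_ge_nine h0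
  rw [ττ, div_mul_eq_mul_div, one_mul, div_le_one hd]; linarith
lemma ττ_le_one {c₀ c₁ : ℝ} (h0 : 0 ≤ c₀) (h1 : 0 ≤ c₁) : ττ c₀ c₁ ≤ 1 := by
  have hd := denom_pos h0 h1
  have h2 := LL_ge_one h0 h1; have h3 := GG_ge_nine h0
  rw [ττ, div_le_one hd]; linarith
lemma ττ_mul_c₀_le {c₀ c₁ : ℝ} (h0 : 0 ≤ c₀) (h1 : 0 ≤ c₁) : ττ c₀ c₁ * (2*c₀ + 2) ≤ 1 := by
  have hd := denom_pos h0 h1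
  have h2 := LL_ge_one h0 h1; have h3 := GG_ge_nine h0
  rw [ττ, div_mul_eq_mul_div, one_mul, div_le_one hd]; linarith

-- P2: comparison with explicit barrier
set_option maxHeartbeats 1000000 in
lemma comparison {n : ℕ} {c₀ c₁ : ℝ} (hc₀ : 0 ≤ c₀) (hc₁ : 0 ≤ c₁)
    {A R R' : ℝ → E n →L[ℝ] E n} {A₀ : E n →L[ℝ] E n}
    (hSA : ∀ s ∈ Icc (0:ℝ) 1, SelfAdj (A s) ∧ SelfAdj (R s))
    (hODE : ∀ s ∈ Icc (0:ℝ) 1, HasDerivAt A (-(A s ∘L A s) - R s) s)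
    (hRh : ∀ s ∈ Icc (0:ℝ) 1, HasDerivAt R (R' s) s ∧ ‖R s‖ ≤ c₀ ∧ ‖R' s‖ ≤ c₁)
    (hA₀sa : SelfAdj A₀)
    (hA₀le : EndLE A₀ (A 0))
    (hA₀pos : ∀ w : E n, (0:ℝ) ≤ inner ℝ (A₀ w) w)
    (hA₀ub : ∀ w : E n, (inner ℝ (A₀ w) w : ℝ) ≤ c₀ * ‖w‖^2)
    (hne : ∃ u : E n, ‖u‖ = 1) :
    ∀ t ∈ Icc (0:ℝ) (ττ c₀ c₁), ∀ v : E n, ‖v‖ = 1 →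
      (inner ℝ (A₀ v) v : ℝ) - t*((inner ℝ (R 0 v) v : ℝ) + ‖A₀ v‖^2) - (LL c₀ c₁)*t^2
        ≤ (inner ℝ (A t v) v : ℝ) := by
  set x₀ := xx c₀ with hx₀def
  set L := LL c₀ c₁ with hLdef
  set Γ := GG c₀ with hΓdef
  set τ := ττ c₀ c₁ with hτdef
  have hx₀ : 0 ≤ x₀ := xx_nonneg hc₀
  have hL1 : 1 ≤ L := LL_ge_one hc₀ hc₁
  have hΓ9 : 9 ≤ Γ := GG_ge_nine hc₀
  have hτpos : 0 < τ := ττ_pos hc₀ hc₁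
  have hτL : τ * L ≤ 1 := ττ_mul_LL_le hc₀ hc₁
  have hτΓ : τ * Γ ≤ 1 := ττ_mul_GG_le hc₀ hc₁
  have hτ1 : τ ≤ 1 := ττ_le_one hc₀ hc₁
  set X : E n →L[ℝ] E n := R 0 + A₀ ∘L A₀ with hXdef
  set B : ℝ → E n →L[ℝ] E n :=
    fun t => A₀ - t • X - (L*t^2) • (1 : E n →L[ℝ] E n) with hBdef
  set U : ℝ → E n →L[ℝ] E n := fun t => A t - B t with hUdef
  have hsub : Icc (0:ℝ) τ ⊆ Icc (0:ℝ) 1 := fun x hx => ⟨hx.1, le_trans hx.2 hτ1⟩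
  have hBapp : ∀ t : ℝ, ∀ z : E n, B t z = A₀ z - t • (X z) - (L*t^2) • z := by
    intro t z
    simp only [hBdef, ContinuousLinearMap.sub_apply, ContinuousLinearMap.smul_apply,
      ContinuousLinearMap.one_apply]
  have hUapp : ∀ t : ℝ, ∀ z : E n, U t z = A t z - B t z := by
    intro t z
    simp only [hUdef, ContinuousLinearMap.sub_apply]
  -- norm facts
  have hA₀apply : ∀ w : E n, ‖A₀ w‖ ≤ c₀ * ‖w‖ :=
    psd_norm_apply_le hA₀sa hA₀pos hA₀ub hc₀
  have hR0norm : ‖R 0‖ ≤ c₀ := (hRh 0 ⟨le_refl _, zero_le_one⟩).2.1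
  have hXapply : ∀ w : E n, ‖w‖ = 1 → ‖X w‖ ≤ x₀ := by
    intro w hw
    have h1 : ‖(R 0) w‖ ≤ c₀ := by
      have := (R 0).le_opNorm w; rw [hw, mul_one] at this; linarith
    have h2 : ‖A₀ (A₀ w)‖ ≤ c₀ * c₀ := by
      calc ‖A₀ (A₀ w)‖ ≤ c₀ * ‖A₀ w‖ := hA₀apply _
        _ ≤ c₀ * (c₀ * ‖w‖) := by
            exact mul_le_mul_of_nonneg_left (hA₀apply w) hc₀
        _ = c₀ * c₀ := by rw [hw, mul_one]
    calc ‖X w‖ ≤ ‖(R 0) w‖ + ‖A₀ (A₀ w)‖ := by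
          rw [hXdef]; simpa using norm_add_le ((R 0) w) (A₀ (A₀ w))
      _ ≤ c₀ + c₀*c₀ := by linarith
      _ = x₀ := by rw [hx₀def]; unfold xx; ring
  -- continuity of U on Icc 0 1
  have hAcont : ContinuousOn A (Icc (0:ℝ) 1) := fun s hs =>
    (hODE s hs).continuousAt.continuousWithinAt
  have hBcont : Continuous B := by
    rw [hBdef]
    apply Continuous.sub
    · exact continuous_const.sub (continuous_id.smul continuous_const)
    · exact (continuous_const.mul (continuous_pow 2)).smul continuous_const
  have hUcont : ContinuousOn U (Icc (0:ℝ) 1) := hAcont.sub hBcont.continuousOn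
  -- key claim with tilt η
  have key : ∀ η : ℝ, 0 < η → η ≤ 1 → ∀ t ∈ Icc (0:ℝ) τ, ∀ v : E n, ‖v‖ = 1 →
      -(η*(1+Γ*t)) < (inner ℝ (U t v) v : ℝ) := by
    intro η hη hη1
    by_contra hcon
    push_neg at hcon
    obtain ⟨t', ht', v', hv', hbad'⟩ := hcon
    set g : ℝ → ℝ := fun t => minForm (U t) + η*(1+Γ*t) with hgdef
    have hgcont : ContinuousOn g (Icc (0:ℝ) τ) := by
      apply ContinuousOn.add
      · exact minForm_continuousOn hne (hUcont.mono hsub)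
      · have : Continuous (fun t : ℝ => η*(1+Γ*t)) := by
          exact continuous_const.mul (continuous_const.add (continuous_const.mul continuous_id))
        exact this.continuousOn
    have hg0 : 0 < g 0 := by
      have hU0 : ∀ w : E n, ‖w‖ = 1 → (0:ℝ) ≤ inner ℝ (U 0 w) w := by
        intro w hw
        have hB0 : B 0 = A₀ := by
          rw [hBdef]
          show A₀ - (0:ℝ) • X - (L*0^2) • (1 : E n →L[ℝ] E n) = A₀
          have hz : (L * 0^2 : ℝ) = 0 := by ring
          rw [hz, zero_smul ℝ X, zero_smul ℝ (1 : E n →L[ℝ] E n), sub_zero, sub_zero]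
        have : (inner ℝ (U 0 w) w : ℝ) = (inner ℝ (A 0 w) w : ℝ) - (inner ℝ (A₀ w) w : ℝ) := by
          rw [hUdef]; simp only [hB0, ContinuousLinearMap.sub_apply, inner_sub_left]
        rw [this]
        linarith [hA₀le w]
      obtain ⟨w, hw, hweq, -⟩ := exists_minimizer (U 0) hne
      have : 0 ≤ minForm (U 0) := hweq ▸ hU0 w hw
      simp only [hgdef]
      nlinarith
    have hgbad : ∃ t ∈ Icc (0:ℝ) τ, g t ≤ 0 := by
      refine ⟨t', ht', ?_⟩
      have h1 : minForm (U t') ≤ (inner ℝ (U t' v') v' : ℝ) := minForm_le _ hv'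
      simp only [hgdef]
      linarith
    obtain ⟨T, hTmem, hgT, hgpos⟩ := first_crossing (le_of_lt hτpos) hgcont hg0 hgbad
    have hT1 : T ∈ Icc (0:ℝ) 1 := hsub ⟨le_of_lt hTmem.1, hTmem.2⟩
    have hTτ : T ≤ τ := hTmem.2
    have hTpos : 0 < T := hTmem.1
    -- minimizer at T
    obtain ⟨w, hw, hweq, hwmin⟩ := exists_minimizer (U T) hne
    set m := minForm (U T) with hmdef
    have hmval : m = -(η*(1+Γ*T)) := by
      have : g T = 0 := hgT
      simp only [hgdef] at this
      linarith
    -- eigenvector property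
    have hBsa : ∀ t : ℝ, SelfAdj (B t) := by
      intro t
      rw [hBdef]
      apply selfAdj_sub
      · apply selfAdj_sub hA₀sa
        rw [hXdef]
        have : (t • (R 0 + A₀ ∘L A₀)) = t • (R 0) + t • (A₀ ∘L A₀) := by
          rw [smul_add]
        rw [this]
        exact selfAdj_add (selfAdj_smul t (hSA 0 ⟨le_refl _, zero_le_one⟩).2)
          (selfAdj_smul t (selfAdj_comp_self hA₀sa))
      · exact selfAdj_smul_one _
    have hUTsa : SelfAdj (U T) := by
      rw [hUdef]
      exact selfAdj_sub (hSA T hT1).1 (hBsa T)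
    have hSop_sa : SelfAdj (U T - m • (1 : E n →L[ℝ] E n)) :=
      selfAdj_sub hUTsa (selfAdj_smul_one m)
    have hSop_pos : ∀ z : E n, (0:ℝ) ≤ inner ℝ ((U T - m • (1 : E n →L[ℝ] E n)) z) z := by
      intro z
      rcases eq_or_ne z 0 with rfl | hz
      · simp
      · have hnz : 0 < ‖z‖ := norm_pos_iff.mpr hz
        set u := ‖z‖⁻¹ • z with hu
        have huu : ‖u‖ = 1 := by
          rw [hu, norm_smul, norm_inv, norm_norm, inv_mul_cancel₀ (ne_of_gt hnz)]
        have h1 : m ≤ (inner ℝ (U T u) u : ℝ) := minForm_le _ huu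
        have h2 : (inner ℝ (U T u) u : ℝ) = ‖z‖⁻¹^2 * (inner ℝ (U T z) z : ℝ) := by
          rw [hu]
          simp only [map_smul, real_inner_smul_left, real_inner_smul_right]
          ring
        simp only [ContinuousLinearMap.sub_apply, ContinuousLinearMap.smul_apply,
          ContinuousLinearMap.one_apply, inner_sub_left, real_inner_smul_left]
        have h3 : m * ‖z‖^2 ≤ (inner ℝ (U T z) z : ℝ) := by
          rw [h2] at h1
          have h4 : 0 < ‖z‖^2 := pow_pos hnz 2
          have h5 : ‖z‖⁻¹^2 = (‖z‖^2)⁻¹ := by rw [inv_pow]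
          rw [h5] at h1
          calc m * ‖z‖^2 ≤ ((‖z‖^2)⁻¹ * (inner ℝ (U T z) z : ℝ)) * ‖z‖^2 := by
                exact mul_le_mul_of_nonneg_right h1 (le_of_lt h4)
            _ = (inner ℝ (U T z) z : ℝ) := by field_simp
        have h6 : (inner ℝ z z : ℝ) = ‖z‖^2 := real_inner_self_eq_norm_sq z
        rw [h6]
        linarith
    have heig : U T w = m • w := by
      have h0 : (inner ℝ ((U T - m • (1 : E n →L[ℝ] E n)) w) w : ℝ) = 0 := by
        simp only [ContinuousLinearMap.sub_apply, ContinuousLinearMap.smul_apply,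
          ContinuousLinearMap.one_apply, inner_sub_left, real_inner_smul_left]
        rw [hweq, real_inner_self_eq_norm_sq, hw]
        ring
      have hz := psd_apply_eq_zero hSop_sa hSop_pos h0
      have h1 : U T w - m • w = 0 := by
        simpa [ContinuousLinearMap.sub_apply, ContinuousLinearMap.smul_apply] using hz
      have := sub_eq_zero.mp h1
      exact this
    -- derivative of B at T
    have hBder : HasDerivAt B (-X - (L*(2*T)) • (1 : E n →L[ℝ] E n)) T := by
      have h1 : HasDerivAt (fun t : ℝ => t • X) ((1:ℝ) • X) T :=
        (hasDerivAt_id T).smul_const X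
      have h2 : HasDerivAt (fun t : ℝ => (L*t^2) • (1 : E n →L[ℝ] E n))
          ((L*(2*T)) • (1 : E n →L[ℝ] E n)) T := by
        have h3 : HasDerivAt (fun t : ℝ => L*t^2) (L*(2*T)) T := by
          have := (hasDerivAt_pow 2 T).const_mul L
          simpa using this
        exact h3.smul_const (1 : E n →L[ℝ] E n)
      have h4 := ((hasDerivAt_const T A₀).sub h1).sub h2
      refine h4.congr_deriv ?_
      simp
    have hAder := hODE T hT1
    have hUder : HasDerivAt U
        ((-(A T ∘L A T) - R T) - (-X - (L*(2*T)) • (1 : E n →L[ℝ] E n))) T :=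
      hAder.sub hBder
    set φ : ℝ → ℝ := fun t => (inner ℝ (U t w) w : ℝ) + η*(1+Γ*t) with hφdef
    have hηder : HasDerivAt (fun t : ℝ => η*(1+Γ*t)) (η*Γ) T := by
      have h1 : HasDerivAt (fun t : ℝ => Γ*t) Γ T := by
        simpa using (hasDerivAt_id T).const_mul Γ
      have h2 := (h1.const_add (1:ℝ)).const_mul η
      simpa using h2
    obtain ⟨dval, hdvaldef⟩ : ∃ d : ℝ, d = (inner ℝ (((-(A T ∘L A T) - R T)
        - (-X - (L*(2*T)) • (1 : E n →L[ℝ] E n))) w) w : ℝ) := ⟨_, rfl⟩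
    have hφder : HasDerivAt φ (dval + η*Γ) T := by
      rw [hdvaldef]
      exact (hasDerivAt_form hUder w).add hηder
    have hφnon : ∀ t, 0 ≤ t → t < T → 0 ≤ φ t := by
      intro t h1 h2
      have h3 := hgpos t h1 h2
      have h4 : minForm (U t) ≤ (inner ℝ (U t w) w : ℝ) := minForm_le _ hw
      simp only [hφdef, hgdef] at h3 ⊢
      linarith
    have hφT : φ T = 0 := by
      simp only [hφdef]
      rw [hweq, hmval]
      ring
    have hd := deriv_nonpos_of_left hTpos hφder hφnon hφT
    -- expand dval
    have hATsa := (hSA T hT1).1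
    have hexp : dval = -(‖A T w‖^2) - (inner ℝ (R T w) w : ℝ) + (inner ℝ (R 0 w) w : ℝ)
        + ‖A₀ w‖^2 + L*(2*T) := by
      have e1 : (inner ℝ ((A T) ((A T) w)) w : ℝ) = ‖(A T) w‖^2 := by
        rw [hATsa ((A T) w) w, real_inner_comm, real_inner_self_eq_norm_sq]
      have e2 : (inner ℝ (A₀ (A₀ w)) w : ℝ) = ‖A₀ w‖^2 := by
        rw [hA₀sa (A₀ w) w, real_inner_comm, real_inner_self_eq_norm_sq]
      have e3 : (inner ℝ w w : ℝ) = 1 := by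
        rw [real_inner_self_eq_norm_sq, hw]; norm_num
      simp only [hdvaldef, hXdef, ContinuousLinearMap.sub_apply,
        ContinuousLinearMap.neg_apply, ContinuousLinearMap.smul_apply,
        ContinuousLinearMap.add_apply, ContinuousLinearMap.comp_apply,
        ContinuousLinearMap.one_apply, inner_sub_left, inner_neg_left,
        inner_add_left, real_inner_smul_left]
      rw [e1, e2, e3]
      ring
    -- R Lipschitz
    have hRlip : ‖R T - R 0‖ ≤ c₁ * T := by
      have hsub2 : Icc (0:ℝ) T ⊆ Icc (0:ℝ) 1 :=
        fun x hx => ⟨hx.1, le_trans hx.2 hT1.2⟩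
      have h1 := norm_image_sub_le_of_norm_deriv_le_segment'
        (f := R) (f' := R') (a := 0) (b := T) (C := c₁)
        (fun x hx => ((hRh x (hsub2 hx)).1).hasDerivWithinAt)
        (fun x hx => (hRh x (hsub2 ⟨hx.1, le_of_lt hx.2⟩)).2.2)
        T ⟨le_of_lt hTpos, le_refl T⟩
      have h2 : c₁ * (T - 0) = c₁ * T := by ring
      rw [h2] at h1
      exact h1
    have hRdiff : -(c₁*T) ≤ (inner ℝ (R 0 w) w : ℝ) - (inner ℝ (R T w) w : ℝ) := by
      have h1 : (inner ℝ (R T w) w : ℝ) - (inner ℝ (R 0 w) w : ℝ)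
          = (inner ℝ ((R T - R 0) w) w : ℝ) := by
        rw [ContinuousLinearMap.sub_apply, inner_sub_left]
      have h2 : |(inner ℝ ((R T - R 0) w) w : ℝ)| ≤ ‖(R T - R 0) w‖ := by
        have := abs_real_inner_le_norm ((R T - R 0) w) w
        rwa [hw, mul_one] at this
      have h3 : ‖(R T - R 0) w‖ ≤ ‖R T - R 0‖ := by
        have := (R T - R 0).le_opNorm w
        rwa [hw, mul_one] at this
      have h4 := abs_le.mp h2
      linarith
    -- norm bounds
    have hβc₀ : ‖A₀ w‖ ≤ c₀ := by
      have := hA₀apply w; rwa [hw, mul_one] at this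
    have hBTw : ‖B T w‖ ≤ ‖A₀ w‖ + T*x₀ + L*T^2 := by
      have h1 : B T w = A₀ w - T • (X w) - (L*T^2) • w := hBapp T w
      rw [h1]
      have h2 : ‖T • (X w)‖ ≤ T * x₀ := by
        rw [norm_smul, Real.norm_eq_abs, abs_of_nonneg (le_of_lt hTpos)]
        exact mul_le_mul_of_nonneg_left (hXapply w hw) (le_of_lt hTpos)
      have h3 : ‖(L*T^2) • w‖ = L*T^2 := by
        rw [norm_smul, Real.norm_eq_abs, hw, mul_one, abs_of_nonneg]
        positivity
      calc ‖A₀ w - T • (X w) - (L*T^2) • w‖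
          ≤ ‖A₀ w - T • (X w)‖ + ‖(L*T^2) • w‖ := norm_sub_le _ _
        _ ≤ ‖A₀ w‖ + ‖T • (X w)‖ + ‖(L*T^2) • w‖ := by
            linarith [norm_sub_le (A₀ w) (T • (X w))]
        _ ≤ ‖A₀ w‖ + T*x₀ + L*T^2 := by rw [h3]; linarith
    have hATw : ‖A T w‖ ≤ ‖A₀ w‖ + (T*x₀ + L*T^2 + η*(1+Γ*T)) := by
      have h1 : A T w = U T w + B T w := by
        rw [hUapp]
        exact (sub_add_cancel (A T w) (B T w)).symm
      rw [h1, heig]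
      have h2 : ‖m • w‖ = η*(1+Γ*T) := by
        rw [norm_smul, Real.norm_eq_abs, hw, mul_one, hmval, abs_neg, abs_of_nonneg]
        have : 0 ≤ Γ*T := mul_nonneg (by linarith) (le_of_lt hTpos)
        positivity
      calc ‖m • w + B T w‖ ≤ ‖m • w‖ + ‖B T w‖ := norm_add_le _ _
        _ ≤ η*(1+Γ*T) + (‖A₀ w‖ + T*x₀ + L*T^2) := by rw [h2]; linarith
        _ = ‖A₀ w‖ + (T*x₀ + L*T^2 + η*(1+Γ*T)) := by ring
    -- final arithmetic contradiction
    have hT1' : T ≤ 1 := hT1.2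
    have hLT2 : L*T^2 ≤ T := by
      have h1 : L*T ≤ 1 := by
        calc L*T ≤ L*τ := mul_le_mul_of_nonneg_left hTτ (by linarith)
          _ ≤ 1 := by linarith only [hτL, mul_comm τ L]
      nlinarith only [h1, hTpos, hT1', hL1]
    have hηΓT : η*(1+Γ*T) ≤ 2*η := by
      have h1 : Γ*T ≤ 1 := by
        calc Γ*T ≤ Γ*τ := mul_le_mul_of_nonneg_left hTτ (by linarith)
          _ ≤ 1 := by linarith only [hτΓ, mul_comm τ Γ]
      nlinarith only [h1, hη]
    obtain ⟨β, hβdef⟩ : ∃ b : ℝ, b = ‖A₀ w‖ := ⟨_, rfl⟩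
    obtain ⟨P, hPdef⟩ : ∃ p : ℝ, p = T*x₀ + L*T^2 + η*(1+Γ*T) := ⟨_, rfl⟩
    have hATw' : ‖A T w‖ ≤ β + P := by rw [hβdef, hPdef]; exact hATw
    have hβnn : 0 ≤ β := by rw [hβdef]; exact norm_nonneg _
    have hβc₀' : β ≤ c₀ := by rw [hβdef]; exact hβc₀
    have hPnn : 0 ≤ P := by
      rw [hPdef]
      have h1 : 0 ≤ Γ*T := mul_nonneg (by linarith) (le_of_lt hTpos)
      have h2 : 0 ≤ L*T^2 := by positivity
      have h3 : 0 ≤ T*x₀ := mul_nonneg (le_of_lt hTpos) hx₀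
      nlinarith only [hη, h1, h2, h3]
    have hPle : P ≤ T*(x₀+1) + 2*η := by
      rw [hPdef]
      linarith only [hLT2, hηΓT]
    have hAT2 : ‖A T w‖^2 ≤ β^2 + 2*β*P + P^2 := by
      have h0 : (0:ℝ) ≤ β + P := by linarith only [hβnn, hPnn]
      have h1 : ‖A T w‖^2 ≤ (β+P)^2 := pow_le_pow_left₀ (norm_nonneg _) hATw' 2
      have h2 : (β+P)^2 = β^2 + 2*β*P + P^2 := by ring
      linarith only [h1, h2]
    have hexpβ : dval = -(‖A T w‖^2) - (inner ℝ (R T w) w : ℝ) + (inner ℝ (R 0 w) w : ℝ)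
        + β^2 + L*(2*T) := by
      rw [hβdef]; exact hexp
    have hdge : -(β^2 + 2*β*P + P^2) - c₁*T + β^2 + 2*L*T ≤ dval := by
      rw [hexpβ]
      have h5 : L*(2*T) = 2*L*T := by ring
      rw [h5]
      linarith only [hAT2, hRdiff]
    have hLval : L = c₁ + c₀*(x₀+1) + (x₀+1)^2 + 1 := by
      rw [hLdef, hx₀def]; unfold LL; ring
    have hΓval : Γ = 4*c₀ + 9 := by rw [hΓdef]; unfold GG; ring
    have hP2 : P^2 ≤ 2*T*(x₀+1)^2 + 8*η := by
      have h1 : P^2 ≤ (T*(x₀+1) + 2*η)^2 := by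
        have := pow_le_pow_left₀ hPnn hPle 2
        linarith only [this]
      have h2 : (T*(x₀+1) + 2*η)^2 ≤ 2*(T*(x₀+1))^2 + 2*(2*η)^2 := by
        nlinarith only [sq_nonneg (T*(x₀+1) - 2*η)]
      have h3 : (T*(x₀+1))^2 ≤ T*(x₀+1)^2 := by
        nlinarith only [hTpos, hT1', sq_nonneg (x₀+1), mul_nonneg (le_of_lt hTpos) hx₀]
      have h4 : (2*η)^2 ≤ 4*η := by nlinarith only [hη, hη1]
      linarith only [h1, h2, h3, h4]
    have h2βP : 2*β*P ≤ 2*c₀*(T*(x₀+1)) + 4*c₀*η := by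
      have h1 : β*P ≤ c₀*P := mul_le_mul_of_nonneg_right hβc₀' hPnn
      have h2 : c₀*P ≤ c₀*(T*(x₀+1) + 2*η) := mul_le_mul_of_nonneg_left hPle hc₀
      nlinarith only [h1, h2]
    have e1 : 2*L*T - c₁*T - 2*c₀*(T*(x₀+1)) - 2*T*(x₀+1)^2 = (c₁+2)*T := by
      rw [hLval]; ring
    have hΓ8 : η*Γ - 4*c₀*η - 8*η = η := by rw [hΓval]; ring
    have hfin2 : (c₁+2)*T + η ≤ dval + η*Γ := by
      linarith only [hdge, hP2, h2βP, e1, hΓ8]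
    have hct : 0 < (c₁+2)*T := mul_pos (by linarith) hTpos
    linarith only [hd, hfin2, hct, hη]
  -- conclude from key
  intro t ht v hv
  have hUnn : 0 ≤ (inner ℝ (U t v) v : ℝ) := by
    by_contra hneg
    push_neg at hneg
    set ε := -(inner ℝ (U t v) v : ℝ) with hε
    have hεpos : 0 < ε := by simp only [hε]; linarith
    set η := min 1 (ε/(2*(1+Γ))) with hη
    have hΓpos : 0 < 1 + Γ := by linarith
    have hηpos : 0 < η := lt_min one_pos (by positivity)
    have hη1 : η ≤ 1 := min_le_left _ _
    have hk := key η hηpos hη1 t ht v hv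
    have h1 : η*(1+Γ*t) ≤ η*(1+Γ) := by
      have ht1 : t ≤ 1 := le_trans ht.2 hτ1
      have hΓnn : (0:ℝ) ≤ Γ := by linarith only [hΓ9]
      have hg1 : Γ*t ≤ Γ := by
        have := mul_nonneg hΓnn (by linarith only [ht1] : (0:ℝ) ≤ 1 - t)
        nlinarith only [this]
      have := mul_nonneg (le_of_lt hηpos) (by linarith only [hg1] : (0:ℝ) ≤ Γ - Γ*t)
      nlinarith only [this]
    have h2 : η*(1+Γ) ≤ ε/2 := by
      have h3 : η ≤ ε/(2*(1+Γ)) := min_le_right _ _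
      calc η*(1+Γ) ≤ (ε/(2*(1+Γ)))*(1+Γ) :=
            mul_le_mul_of_nonneg_right h3 (le_of_lt hΓpos)
        _ = ε/2 := by field_simp
    -- hk : -(η*(1+Γ*t)) < inner ℝ (U t v) v = -ε
    have hlt : -(η*(1+Γ*t)) < -ε := by rw [hε, neg_neg]; exact hk
    have hA : ε < η*(1+Γ*t) := by linarith only [hlt]
    have hB : ε < ε/2 := lt_of_lt_of_le (lt_of_lt_of_le hA h1) h2
    exact absurd hB (lt_asymm (half_lt_self hεpos))
  -- expand
  have hBtv : (inner ℝ (B t v) v : ℝ)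
      = (inner ℝ (A₀ v) v : ℝ) - t*((inner ℝ (R 0 v) v : ℝ) + ‖A₀ v‖^2) - L*t^2 := by
    have e2 : (inner ℝ (A₀ (A₀ v)) v : ℝ) = ‖A₀ v‖^2 := by
      rw [hA₀sa (A₀ v) v, real_inner_comm, real_inner_self_eq_norm_sq]
    have e3 : (inner ℝ v v : ℝ) = 1 := by
      rw [real_inner_self_eq_norm_sq, hv]; norm_num
    simp only [hBdef, hXdef, ContinuousLinearMap.sub_apply,
      ContinuousLinearMap.smul_apply, ContinuousLinearMap.add_apply,
      ContinuousLinearMap.comp_apply, ContinuousLinearMap.one_apply,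
      inner_sub_left, inner_add_left, real_inner_smul_left]
    rw [e2, e3]
    ring
  have hUtv : (inner ℝ (U t v) v : ℝ)
      = (inner ℝ (A t v) v : ℝ) - (inner ℝ (B t v) v : ℝ) := by
    simp [hUdef, ContinuousLinearMap.sub_apply, inner_sub_left]
  rw [hUtv, hBtv] at hUnn
  linarith


lemma form_smul {n : ℕ} (S : E n →L[ℝ] E n) (c : ℝ) (w : E n) :
    (inner ℝ (S (c • w)) (c • w) : ℝ) = c^2 * (inner ℝ (S w) w : ℝ) := by
  rw [map_smul, real_inner_smul_left, real_inner_smul_right]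
  ring

set_option maxHeartbeats 1000000 in
/-- **Lemma (Riccati comparison, lower estimate).** -/
theorem riccati_lower_estimate (C_R : ℝ) :
    ∃ s₀ : ℝ, 0 < s₀ ∧
    ∀ C_R' ε₀ : ℝ, 0 < ε₀ →
    ∃ C : ℝ, 0 < C ∧
    ∀ (n : ℕ) (A R R' : ℝ → (E n →L[ℝ] E n)) (A₀ : E n →L[ℝ] E n),
      (∀ s ∈ Icc (0 : ℝ) 1, SelfAdj (A s) ∧ SelfAdj (R s)) →
      -- the Riccati equation `A'(s) + A(s)² + R(s) = 0`
      (∀ s ∈ Icc (0 : ℝ) 1, HasDerivAt A (-(A s ∘L A s) - R s) s) →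
      -- `R` differentiable with derivative `R'`, `|R| ≤ C_R`, `|R'| ≤ C_R'`
      (∀ s ∈ Icc (0 : ℝ) 1, HasDerivAt R (R' s) s ∧ ‖R s‖ ≤ C_R ∧ ‖R' s‖ ≤ C_R') →
      SelfAdj A₀ →
      EndLE A₀ (A 0) →
      (∀ v : E n, (inner ℝ (A₀ v) v : ℝ) ≤ C_R * ‖v‖ ^ 2) →
      (∀ w : E n, ‖w‖ = 1 →
        ε₀ * (inner ℝ (R 0 w) w : ℝ) ^ 2 ≤ (inner ℝ (A₀ w) w : ℝ)) →
      ∀ s ∈ Ioc (0 : ℝ) s₀, ∀ v : E n,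
        -(C * s ^ 2) * ‖v‖ ^ 2 ≤ (inner ℝ (A s v) v : ℝ) := by
  refine ⟨1/2, by norm_num, ?_⟩
  intro C_R' ε₀ hε₀
  obtain ⟨c₀, hc₀def⟩ : ∃ c : ℝ, c = max C_R 0 := ⟨_, rfl⟩
  obtain ⟨c₁, hc₁def⟩ : ∃ c : ℝ, c = max C_R' 0 := ⟨_, rfl⟩
  have hc₀ : 0 ≤ c₀ := by rw [hc₀def]; exact le_max_right _ _
  have hc₁ : 0 ≤ c₁ := by rw [hc₁def]; exact le_max_right _ _
  have hCRc₀ : C_R ≤ c₀ := by rw [hc₀def]; exact le_max_left _ _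
  have hCRc₁ : C_R' ≤ c₁ := by rw [hc₁def]; exact le_max_left _ _
  obtain ⟨τ, hτdef⟩ : ∃ t : ℝ, t = ττ c₀ c₁ := ⟨_, rfl⟩
  obtain ⟨L, hLdef⟩ : ∃ l : ℝ, l = LL c₀ c₁ := ⟨_, rfl⟩
  have hτpos : 0 < τ := by rw [hτdef]; exact ττ_pos hc₀ hc₁
  have hτ1 : τ ≤ 1 := by rw [hτdef]; exact ττ_le_one hc₀ hc₁
  have hL1 : 1 ≤ L := by rw [hLdef]; exact LL_ge_one hc₀ hc₁
  have hτc₀ : τ * (2*c₀ + 2) ≤ 1 := by rw [hτdef]; exact ττ_mul_c₀_le hc₀ hc₁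
  refine ⟨1/(2*ε₀) + L + (c₀+3)/τ^2 + 1, ?_, ?_⟩
  · have h1 : 0 < 1/(2*ε₀) := by positivity
    have h2 : 0 ≤ (c₀+3)/τ^2 := div_nonneg (by linarith) (sq_nonneg τ)
    linarith
  intro n A R R' A₀ hSA hODE hRh hA₀sa hA₀le hA₀ub hA₀eps s hs v
  have hRb : ∀ x ∈ Icc (0:ℝ) 1, ‖R x‖ ≤ c₀ :=
    fun x hx => le_trans (hRh x hx).2.1 hCRc₀
  have hRh' : ∀ x ∈ Icc (0:ℝ) 1, HasDerivAt R (R' x) x ∧ ‖R x‖ ≤ c₀ ∧ ‖R' x‖ ≤ c₁ :=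
    fun x hx => ⟨(hRh x hx).1, hRb x hx, le_trans (hRh x hx).2.2 hCRc₁⟩
  have hA₀ub' : ∀ w : E n, (inner ℝ (A₀ w) w : ℝ) ≤ c₀ * ‖w‖^2 :=
    fun w => le_trans (hA₀ub w)
      (mul_le_mul_of_nonneg_right hCRc₀ (sq_nonneg _))
  have hA₀pos : ∀ w : E n, (0:ℝ) ≤ inner ℝ (A₀ w) w := by
    intro w
    rcases eq_or_ne w 0 with rfl | hw0
    · simp
    · have hnw : 0 < ‖w‖ := norm_pos_iff.mpr hw0
      have hu : ‖(‖w‖⁻¹ • w)‖ = 1 := by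
        rw [norm_smul, norm_inv, norm_norm, inv_mul_cancel₀ (ne_of_gt hnw)]
      have h := hA₀eps _ hu
      have h2 : (0:ℝ) ≤ inner ℝ (A₀ (‖w‖⁻¹ • w)) (‖w‖⁻¹ • w) :=
        le_trans (mul_nonneg (le_of_lt hε₀) (sq_nonneg _)) h
      rw [form_smul A₀ (‖w‖⁻¹) w] at h2
      have hc2 : (0:ℝ) < (‖w‖⁻¹)^2 := pow_pos (inv_pos.mpr hnw) 2
      nlinarith only [h2, hc2]
  have hs0 : 0 < s := hs.1
  have hs12 : s ≤ 1/2 := hs.2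
  rcases eq_or_ne v 0 with rfl | hv0
  · simp
  · have hnv : 0 < ‖v‖ := norm_pos_iff.mpr hv0
    obtain ⟨u, hudef⟩ : ∃ u : E n, u = ‖v‖⁻¹ • v := ⟨_, rfl⟩
    have hu : ‖u‖ = 1 := by
      rw [hudef, norm_smul, norm_inv, norm_norm, inv_mul_cancel₀ (ne_of_gt hnv)]
    have hkey : -((1/(2*ε₀) + L + (c₀+3)/τ^2 + 1) * s^2) ≤ (inner ℝ (A s u) u : ℝ) := by
      rcases le_or_gt s τ with hsτ | hsτ
      · -- small time: use comparison
        have hcomp := comparison hc₀ hc₁ hSA hODE hRh' hA₀sa hA₀le hA₀pos hA₀ub'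
          ⟨u, hu⟩ s ⟨le_of_lt hs0, by rw [← hτdef]; exact hsτ⟩ u hu
        rw [← hLdef] at hcomp
        obtain ⟨q, hqdef⟩ : ∃ x : ℝ, x = (inner ℝ (R 0 u) u : ℝ) := ⟨_, rfl⟩
        obtain ⟨a₀, ha₀def⟩ : ∃ x : ℝ, x = (inner ℝ (A₀ u) u : ℝ) := ⟨_, rfl⟩
        have hq2 : ε₀*q^2 ≤ a₀ := by rw [hqdef, ha₀def]; exact hA₀eps u hu
        have ha₀nn : 0 ≤ a₀ := le_trans (mul_nonneg (le_of_lt hε₀) (sq_nonneg _)) hq2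
        have hA₀usq : ‖A₀ u‖^2 ≤ c₀ * a₀ := by
          rw [ha₀def]
          exact psd_norm_apply_sq_le hA₀sa hA₀pos hA₀ub' hc₀ u
        have hcomp' : a₀ - s*(q + ‖A₀ u‖^2) - L*s^2 ≤ (inner ℝ (A s u) u : ℝ) := by
          rw [hqdef, ha₀def]; exact hcomp
        have hsc₀ : s*c₀ ≤ 1/2 := by
          have h1 : τ*c₀ ≤ 1/2 := by nlinarith only [hτc₀, hτpos]
          have h2 : s*c₀ ≤ τ*c₀ := mul_le_mul_of_nonneg_right hsτ hc₀
          linarith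
        have e2 : a₀*(1/2) ≤ a₀*(1 - s*c₀) :=
          mul_le_mul_of_nonneg_left (by linarith) ha₀nn
        have hDq : s*q ≤ (ε₀/2)*q^2 + (1/(2*ε₀))*s^2 := by
          have hkey2 : 2*ε₀*((ε₀/2)*q^2 + (1/(2*ε₀))*s^2 - s*q) = (ε₀*q - s)^2 := by
            field_simp
            ring
          nlinarith only [hkey2, sq_nonneg (ε₀*q - s), hε₀]
        have hsA : s*‖A₀ u‖^2 ≤ s*(c₀*a₀) :=
          mul_le_mul_of_nonneg_left hA₀usq (le_of_lt hs0)
        have hq2' : (ε₀/2)*q^2 ≤ a₀*(1/2) := by linarith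
        have hextra : 0 ≤ ((c₀+3)/τ^2)*s^2 :=
          mul_nonneg (div_nonneg (by linarith) (sq_nonneg τ)) (sq_nonneg s)
        have hs2 : 0 ≤ s^2 := sq_nonneg s
        nlinarith only [hcomp', e2, hDq, hsA, hq2', hextra, hs2, hs0]
      · -- large time: use uniform lower bound
        have hlow := uniform_lower hc₀ (fun x hx => (hSA x hx).1) hODE hRb
          ⟨le_of_lt hs0, hs12⟩ hu
        have hss : τ^2 ≤ s^2 := by nlinarith only [hτpos, hsτ]
        have hfs : ((c₀+3)/τ^2)*τ^2 = c₀+3 := by field_simp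
        have hCs : c₀+3 ≤ ((c₀+3)/τ^2) * s^2 := by
          calc c₀+3 = ((c₀+3)/τ^2)*τ^2 := hfs.symm
            _ ≤ ((c₀+3)/τ^2)*s^2 :=
                mul_le_mul_of_nonneg_left hss (div_nonneg (by linarith) (sq_nonneg τ))
        have h1 : 0 ≤ (1/(2*ε₀))*s^2 := by positivity
        have h2 : 0 ≤ L*s^2 := mul_nonneg (by linarith) (sq_nonneg s)
        have h3 : 0 ≤ s^2 := sq_nonneg s
        nlinarith only [hlow, hCs, h1, h2, h3]
    -- scale back to v
    have hveq : v = ‖v‖ • u := by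
      rw [hudef, smul_smul, mul_inv_cancel₀ (ne_of_gt hnv), one_smul]
    have hscale : (inner ℝ (A s v) v : ℝ) = ‖v‖^2 * (inner ℝ (A s u) u : ℝ) := by
      conv_lhs => rw [hveq]
      exact form_smul (A s) ‖v‖ u
    rw [hscale]
    have hmul := mul_le_mul_of_nonneg_left hkey (sq_nonneg ‖v‖)
    nlinarith only [hmul]
end
end
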